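/- In the spatially homogeneous three-temperature exchange system with nonnegative coupling coefficients Λ_is, Λ_rs, Λ_ir ≥ 0 and positive heat capacities, the minimum initial temperature is a lower bound and the maximum initial temperature is an upper bound for all three temperatures at all later times: if m ≤ T_i(0), T_r(0), T_s(0) ≤ M then m ≤ T_i(t), T_r(t), T_s(t) ≤ M for all t ≥ 0. -/

import Mathlib

open Filter Topology Set

private lemma freq_slope_aux {g f : ℝ → ℝ} {g' x r : ℝ}
    (hg : HasDerivAt g g' x) (hf : ContinuousAt f x)
    (hle : ∀ z, g z ≤ f z)
    (hfreq : ∃ᶠ z in 𝓝[>] x, g z = f z)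
    (hkey : g x = f x → g' ≤ 0) (hr : 0 < r) :
    ∃ᶠ z in 𝓝[>] x, slope f x z < r := by
  have h1 : Tendsto g (𝓝[>] x) (𝓝 (g x)) :=
    hg.continuousAt.tendsto.mono_left nhdsWithin_le_nhds
  have h2 : Tendsto f (𝓝[>] x) (𝓝 (f x)) :=
    hf.tendsto.mono_left nhdsWithin_le_nhds
  have heq : g x = f x := tendsto_nhds_unique_of_frequently_eq h1 h2 hfreq
  have hslope : Tendsto (slope g x) (𝓝[>] x) (𝓝 g') :=
    (hasDerivAt_iff_tendsto_slope.1 hg).mono_left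
      (nhdsWithin_mono x fun z hz => hz.ne')
  have hev : ∀ᶠ z in 𝓝[>] x, slope g x z < r :=
    hslope.eventually_lt_const (lt_of_le_of_lt (hkey heq) hr)
  refine (hfreq.and_eventually hev).mono ?_
  rintro z ⟨hz1, hz2⟩
  have : slope f x z = slope g x z := by
    rw [slope_def_field, slope_def_field, hz1, heq]
  rwa [this]

private lemma max3_le_aux (Ci Cr Cs Λis Λrs Λir : ℝ)
    (hCi : 0 < Ci) (hCr : 0 < Cr) (hCs : 0 < Cs)
    (hΛis : 0 ≤ Λis) (hΛrs : 0 ≤ Λrs) (hΛir : 0 ≤ Λir)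
    (Ti Tr Ts : ℝ → ℝ)
    (hi : ∀ t ≥ 0, HasDerivAt Ti ((Λis * (Ts t - Ti t) + Λir * (Tr t - Ti t)) / Ci) t)
    (hr : ∀ t ≥ 0, HasDerivAt Tr ((Λrs * (Ts t - Tr t) + Λir * (Ti t - Tr t)) / Cr) t)
    (hs : ∀ t ≥ 0, HasDerivAt Ts ((Λis * (Ti t - Ts t) + Λrs * (Tr t - Ts t)) / Cs) t)
    (M : ℝ) (h0i : Ti 0 ≤ M) (h0r : Tr 0 ≤ M) (h0s : Ts 0 ≤ M) :
    ∀ t ≥ 0, Ti t ≤ M ∧ Tr t ≤ M ∧ Ts t ≤ M := by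
  intro b hb
  set f : ℝ → ℝ := fun z => max (max (Ti z) (Tr z)) (Ts z) with hf_def
  have hcontAt : ∀ x : ℝ, 0 ≤ x → ContinuousAt f x := fun x hx =>
    (((hi x hx).continuousAt.max (hr x hx).continuousAt).max (hs x hx).continuousAt)
  have hcont : ContinuousOn f (Icc 0 b) := fun x hx =>
    (hcontAt x hx.1).continuousWithinAt
  have hlei : ∀ z, Ti z ≤ f z := fun z => le_trans (le_max_left _ _) (le_max_left _ _)
  have hler : ∀ z, Tr z ≤ f z := fun z => le_trans (le_max_right _ _) (le_max_left _ _)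
  have hles : ∀ z, Ts z ≤ f z := fun z => le_max_right _ _
  have key : ∀ x ∈ Icc (0:ℝ) b, f x ≤ M := by
    apply image_le_of_liminf_slope_right_le_deriv_boundary (B := fun _ => M)
      (B' := fun _ => 0) hcont
    · exact max_le (max_le h0i h0r) h0s
    · exact continuousOn_const
    · exact fun x _ => hasDerivWithinAt_const x _ M
    · intro x hx r hrpos
      have hx0 : (0:ℝ) ≤ x := hx.1
      have hcov : ∀ᶠ z in 𝓝[>] x, Ti z = f z ∨ Tr z = f z ∨ Ts z = f z := by
        filter_upwards with z
        rcases max_choice (max (Ti z) (Tr z)) (Ts z) with h | h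
        · rcases max_choice (Ti z) (Tr z) with h' | h'
          · exact Or.inl (h.trans h').symm
          · exact Or.inr (Or.inl (h.trans h').symm)
        · exact Or.inr (Or.inr h.symm)
      have hcov' : (∃ᶠ z in 𝓝[>] x, Ti z = f z) ∨ (∃ᶠ z in 𝓝[>] x, Tr z = f z) ∨
          (∃ᶠ z in 𝓝[>] x, Ts z = f z) := by
        rw [← frequently_or_distrib, ← frequently_or_distrib]
        exact hcov.frequently
      rcases hcov' with h | h | h
      · refine freq_slope_aux (hi x hx0) (hcontAt x hx0) hlei h (fun he => ?_) hrpos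
        have h1 : Ts x ≤ Ti x := he ▸ hles x
        have h2 : Tr x ≤ Ti x := he ▸ hler x
        have : Λis * (Ts x - Ti x) + Λir * (Tr x - Ti x) ≤ 0 :=
          add_nonpos (mul_nonpos_of_nonneg_of_nonpos hΛis (by linarith))
            (mul_nonpos_of_nonneg_of_nonpos hΛir (by linarith))
        exact div_nonpos_of_nonpos_of_nonneg this hCi.le
      · refine freq_slope_aux (hr x hx0) (hcontAt x hx0) hler h (fun he => ?_) hrpos
        have h1 : Ts x ≤ Tr x := he ▸ hles x
        have h2 : Ti x ≤ Tr x := he ▸ hlei x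
        have : Λrs * (Ts x - Tr x) + Λir * (Ti x - Tr x) ≤ 0 :=
          add_nonpos (mul_nonpos_of_nonneg_of_nonpos hΛrs (by linarith))
            (mul_nonpos_of_nonneg_of_nonpos hΛir (by linarith))
        exact div_nonpos_of_nonpos_of_nonneg this hCr.le
      · refine freq_slope_aux (hs x hx0) (hcontAt x hx0) hles h (fun he => ?_) hrpos
        have h1 : Ti x ≤ Ts x := he ▸ hlei x
        have h2 : Tr x ≤ Ts x := he ▸ hler x
        have : Λis * (Ti x - Ts x) + Λrs * (Tr x - Ts x) ≤ 0 :=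
          add_nonpos (mul_nonpos_of_nonneg_of_nonpos hΛis (by linarith))
            (mul_nonpos_of_nonneg_of_nonpos hΛrs (by linarith))
        exact div_nonpos_of_nonpos_of_nonneg this hCs.le
  have hfb : f b ≤ M := key b ⟨hb, le_refl b⟩
  exact ⟨le_trans (hlei b) hfb, le_trans (hler b) hfb, le_trans (hles b) hfb⟩

theorem three_temperature_comparison_principle
    (Ci Cr Cs Λis Λrs Λir : ℝ)
    (hCi : 0 < Ci) (hCr : 0 < Cr) (hCs : 0 < Cs)
    (hΛis : 0 ≤ Λis) (hΛrs : 0 ≤ Λrs) (hΛir : 0 ≤ Λir)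
    (Ti Tr Ts : ℝ → ℝ)
    (hi : ∀ t ≥ 0, HasDerivAt Ti ((Λis * (Ts t - Ti t) + Λir * (Tr t - Ti t)) / Ci) t)
    (hr : ∀ t ≥ 0, HasDerivAt Tr ((Λrs * (Ts t - Tr t) + Λir * (Ti t - Tr t)) / Cr) t)
    (hs : ∀ t ≥ 0, HasDerivAt Ts ((Λis * (Ti t - Ts t) + Λrs * (Tr t - Ts t)) / Cs) t)
    (m M : ℝ)
    (h0i : m ≤ Ti 0 ∧ Ti 0 ≤ M)
    (h0r : m ≤ Tr 0 ∧ Tr 0 ≤ M)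
    (h0s : m ≤ Ts 0 ∧ Ts 0 ≤ M) :
    ∀ t ≥ 0, (m ≤ Ti t ∧ Ti t ≤ M) ∧ (m ≤ Tr t ∧ Tr t ≤ M) ∧
      (m ≤ Ts t ∧ Ts t ≤ M) := by
  have upper := max3_le_aux Ci Cr Cs Λis Λrs Λir hCi hCr hCs hΛis hΛrs hΛir Ti Tr Ts
    hi hr hs M h0i.2 h0r.2 h0s.2
  have lower := max3_le_aux Ci Cr Cs Λis Λrs Λir hCi hCr hCs hΛis hΛrs hΛir
    (fun t => -Ti t) (fun t => -Tr t) (fun t => -Ts t)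
    (fun t ht => by
      have := (hi t ht).fun_neg
      refine this.congr_deriv ?_
      ring)
    (fun t ht => by
      have := (hr t ht).fun_neg
      refine this.congr_deriv ?_
      ring)
    (fun t ht => by
      have := (hs t ht).fun_neg
      refine this.congr_deriv ?_
      ring)
    (-m) (by simpa using neg_le_neg h0i.1) (by simpa using neg_le_neg h0r.1)
    (by simpa using neg_le_neg h0s.1)
  intro t ht
  obtain ⟨u1, u2, u3⟩ := upper t ht
  obtain ⟨l1, l2, l3⟩ := lower t ht
  have l1' : -Ti t ≤ -m := l1
  have l2' : -Tr t ≤ -m := l2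
  have l3' : -Ts t ≤ -m := l3
  exact ⟨⟨by linarith, u1⟩, ⟨by linarith, u2⟩, ⟨by linarith, u3⟩⟩
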